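/- The sequence (a_{2;10}(n))_{n≥0} has no prefix of the form vv except v = 0 and v = 00; consequently it is not purely morphic. -/

import Mathlib

/-- Number of occurrences of the word `w` as a factor of the word `x`. -/
def occCount (w x : List ℕ) : ℕ :=
  (List.range (x.length + 1)).countP (fun i => decide (w <+: x.drop i))

/-- Base-`m` expansion of `n`, most significant digit first, with `0` written as the digit `0`. -/
def baseExp (m n : ℕ) : List ℕ :=
  if n = 0 then [0] else (Nat.digits m n).reverse

/-- `e_{m;w}(n)`: number of occurrences of `w` in the base-`m` expansion of `n`. -/
def eCount (m : ℕ) (w : List ℕ) (n : ℕ) : ℕ := occCount w (baseExp m n)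

/-- `a_{m;w}(n) = e_{m;w}(n) mod m`. -/
def aSeq (m : ℕ) (w : List ℕ) (n : ℕ) : ℕ := eCount m w n % m

/-- The value `(w)_m` of the digit string `w` in base `m`. -/
def wordVal (m : ℕ) (w : List ℕ) : ℕ := w.foldl (fun acc d => acc * m + d) 0

/-- The finite word `v` is a prefix of the infinite sequence `s`. -/
def IsPrefixSeq (v : List ℕ) (s : ℕ → ℕ) : Prop := ∀ n < v.length, s n = v.getD n 0

/-- Length of the image under the morphism `φ` of the first `n` letters of `s`. -/
def morphPrefixLen (φ : ℕ → List ℕ) (s : ℕ → ℕ) (n : ℕ) : ℕ :=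
  (Finset.range n).sum fun j => (φ (s j)).length

/-- The infinite sequence `s` is a fixed point of the morphism `φ` (extended by
concatenation to infinite words). -/
def IsMorphFixedPoint (φ : ℕ → List ℕ) (s : ℕ → ℕ) : Prop :=
  ∀ n : ℕ, ∀ i < (φ (s n)).length,
    s (morphPrefixLen φ s n + i) = (φ (s n)).getD i 0

/-- The sequence `s` over the alphabet `{0,...,p-1}` is purely morphic: it is a fixed
point of a non-erasing morphism of `{0,...,p-1}*`, prolongable on the first letter. -/
def PurelyMorphic (p : ℕ) (s : ℕ → ℕ) : Prop :=
  ∃ φ : ℕ → List ℕ,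
    (∀ c < p, φ c ≠ [] ∧ ∀ d ∈ φ c, d < p) ∧
    2 ≤ (φ (s 0)).length ∧
    IsMorphFixedPoint φ s

def pairCount : List ℕ → ℕ
  | a :: b :: t => (if a = 1 ∧ b = 0 then 1 else 0) + pairCount (b :: t)
  | _ => 0

lemma occCount_cons (w : List ℕ) (a : ℕ) (t : List ℕ) :
    occCount w (a :: t) = (if w <+: a :: t then 1 else 0) + occCount w t := by
  unfold occCount
  rw [show (a :: t).length + 1 = (t.length + 1) + 1 from rfl, List.range_succ_eq_map]
  rw [List.countP_cons, List.countP_map]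
  have : ((fun i => decide (w <+: (a :: t).drop i)) ∘ Nat.succ)
      = fun i => decide (w <+: t.drop i) := rfl
  rw [this]
  simp only [List.drop_zero]
  by_cases h : w <+: a :: t <;> simp [h] <;> omega

lemma occ_eq_pair : ∀ x, occCount [1,0] x = pairCount x
  | [] => by decide
  | [a] => by
      rw [occCount_cons]
      have : ¬ ([1,0] <+: [a]) := by
        intro h; have := h.length_le; simp at this
      simp [this, pairCount]
      decide
  | a :: b :: t => by
      rw [occCount_cons, occ_eq_pair (b :: t)]
      have h1 : ([1,0] <+: a :: b :: t) ↔ (a = 1 ∧ b = 0) := by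
        constructor
        · intro h
          rcases h with ⟨r, hr⟩
          simp at hr
          exact ⟨hr.1.symm, hr.2.1.symm⟩
        · rintro ⟨rfl, rfl⟩
          exact ⟨t, rfl⟩
      have h2 : pairCount (a :: b :: t)
          = (if a = 1 ∧ b = 0 then 1 else 0) + pairCount (b :: t) := rfl
      rw [h2]
      simp only [h1]

lemma pairCount_append_singleton : ∀ (l : List ℕ) (c : ℕ),
    pairCount (l ++ [c]) = pairCount l + (if l.getLast? = some 1 ∧ c = 0 then 1 else 0)
  | [], c => by simp [pairCount]
  | [a], c => by
      have h1 : pairCount ([a] ++ [c]) = (if a = 1 ∧ c = 0 then 1 else 0) + pairCount [c] := rfl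
      have h2 : pairCount [c] = 0 := rfl
      have h3 : pairCount [a] = 0 := rfl
      rw [h1, h2, h3]
      by_cases ha : a = 1 <;> by_cases hc : c = 0 <;> simp [ha, hc]
  | a :: b :: t, c => by
      have h1 : pairCount ((a :: b :: t) ++ [c])
          = (if a = 1 ∧ b = 0 then 1 else 0) + pairCount ((b :: t) ++ [c]) := rfl
      have h2 : pairCount (a :: b :: t)
          = (if a = 1 ∧ b = 0 then 1 else 0) + pairCount (b :: t) := rfl
      rw [h1, h2, pairCount_append_singleton (b :: t) c]
      rw [List.getLast?_cons_cons]
      omega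

lemma e_odd (n : ℕ) : eCount 2 [1,0] (2*n+1) = eCount 2 [1,0] n := by
  rcases eq_or_ne n 0 with rfl | hn
  · show eCount 2 [1,0] 1 = eCount 2 [1,0] 0
    unfold eCount baseExp; norm_num; decide
  · unfold eCount baseExp
    rw [if_neg (by omega : 2*n+1 ≠ 0), if_neg hn]
    rw [Nat.digits_def' (by norm_num : 1 < 2) (by omega : 0 < 2*n+1)]
    have h1 : (2*n+1) % 2 = 1 := by omega
    have h2 : (2*n+1) / 2 = n := by omega
    rw [h1, h2, List.reverse_cons, occ_eq_pair, occ_eq_pair,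
      pairCount_append_singleton]
    simp

lemma e_even (n : ℕ) (hn : n ≠ 0) :
    eCount 2 [1,0] (2*n) = eCount 2 [1,0] n + n % 2 := by
  unfold eCount baseExp
  rw [if_neg (by omega : 2*n ≠ 0), if_neg hn]
  rw [show (2*n) = 2*n from rfl, Nat.digits_def' (by norm_num : 1 < 2) (by omega : 0 < 2*n)]
  have h1 : (2*n) % 2 = 0 := by omega
  have h2 : (2*n) / 2 = n := by omega
  rw [h1, h2, List.reverse_cons, occ_eq_pair, occ_eq_pair,
    pairCount_append_singleton]
  have h3 : (Nat.digits 2 n).reverse.getLast? = (Nat.digits 2 n).head? := by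
    simp [List.getLast?_reverse]
  rw [h3, Nat.digits_def' (by norm_num : 1 < 2) (Nat.pos_of_ne_zero hn)]
  have h4 : n % 2 = 0 ∨ n % 2 = 1 := by omega
  rcases h4 with h4 | h4 <;> simp [h4]

lemma s_odd (n : ℕ) : aSeq 2 [1,0] (2*n+1) = aSeq 2 [1,0] n := by
  unfold aSeq; rw [e_odd]

lemma s0 : aSeq 2 [1,0] 0 = 0 := by unfold aSeq eCount baseExp; norm_num; decide
lemma s1 : aSeq 2 [1,0] 1 = 0 := by unfold aSeq eCount baseExp; norm_num; decide
lemma s2 : aSeq 2 [1,0] 2 = 1 := by unfold aSeq eCount baseExp; norm_num; decide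
lemma s3 : aSeq 2 [1,0] 3 = 0 := by unfold aSeq eCount baseExp; norm_num; decide
lemma s4 : aSeq 2 [1,0] 4 = 1 := by unfold aSeq eCount baseExp; norm_num; decide

lemma s_even (n : ℕ) : aSeq 2 [1,0] (2*n) = (aSeq 2 [1,0] n + n) % 2 := by
  rcases eq_or_ne n 0 with rfl | hn
  · rw [show 2*0 = 0 from rfl, s0]
  · unfold aSeq
    rw [e_even n hn]
    omega

lemma s_lt (n : ℕ) : aSeq 2 [1,0] n < 2 := Nat.mod_lt _ (by norm_num)

lemma key : ∀ k, 2 ≤ k → (∀ n < k, aSeq 2 [1,0] n = aSeq 2 [1,0] (n + k)) → False := by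
  intro k
  induction k using Nat.strong_induction_on with
  | _ k ih =>
    intro hk H
    rcases Nat.even_or_odd k with ⟨m, hm⟩ | ⟨m, hm⟩
    · -- k = m + m
      by_cases hm1 : m = 1
      · have h := H 0 (by omega)
        rw [show 0 + k = 2 by omega, s0, s2] at h
        exact absurd h (by norm_num)
      · have hm2 : 2 ≤ m := by omega
        refine ih m (by omega) hm2 (fun n hn => ?_)
        have h1 := H (2*n+1) (by omega)
        rw [s_odd, show 2*n+1+k = 2*(n+m)+1 by omega, s_odd] at h1
        exact h1
    · -- k = 2*m + 1
      by_cases hm2 : m = 1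
      · have h := H 1 (by omega)
        rw [show 1 + k = 4 by omega, s1, s4] at h
        exact absurd h (by norm_num)
      · have hm : 2 ≤ m := by omega
        have h2 := H 2 (by omega)
        rw [show (2:ℕ) = 2*1 from rfl, s_even, show 2*1+k = 2*(m+1)+1 by omega, s_odd] at h2
        have h1 := H 1 (by omega)
        rw [show 1 + k = 2*(m+1) by omega, s_even] at h1
        have h3 := H 3 (by omega)
        rw [show (3:ℕ) = 2*1+1 from rfl, s_odd, show 2*1+1+k = 2*(m+2) by omega, s_even] at h3
        have h4 := H 4 (by omega)
        rw [show (4:ℕ) = 2*2 from rfl, s_even, show 2*2+k = 2*(m+2)+1 by omega, s_odd] at h4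
        have v1 := s1
        have v2 := s2
        have lt1 := s_lt (m+1)
        have lt2 := s_lt (m+2)
        omega

lemma part1 : ∀ v : List ℕ, v ≠ [] → IsPrefixSeq (v ++ v) (aSeq 2 [1, 0]) →
    v = [0] ∨ v = [0, 0] := by
  intro v hv hpre
  have hk1 : 1 ≤ v.length := List.length_pos_iff.mpr hv
  by_cases h2 : 2 ≤ v.length
  · exfalso
    apply key v.length h2
    intro n hn
    have ha := hpre n (by rw [List.length_append]; omega)
    have hb := hpre (n + v.length) (by rw [List.length_append]; omega)
    rw [List.getD_append _ _ _ _ hn] at ha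
    rw [List.getD_append_right _ _ _ _ (by omega), Nat.add_sub_cancel] at hb
    rw [ha, hb]
  · have h1 : v.length = 1 := by omega
    left
    obtain ⟨a, rfl⟩ := List.length_eq_one_iff.mp h1
    have h := hpre 0 (by simp)
    rw [s0] at h
    simp at h
    rw [h]

lemma part2 : ¬ PurelyMorphic 2 (aSeq 2 [1, 0]) := by
  rintro ⟨φ, -, hlen, hfix⟩
  set v := φ (aSeq 2 [1,0] 0) with hv
  have hL : 2 ≤ v.length := hlen
  have hφ1 : φ (aSeq 2 [1,0] 1) = v := by rw [hv, s1, s0]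
  have hpre : IsPrefixSeq (v ++ v) (aSeq 2 [1,0]) := by
    intro n hn
    rw [List.length_append] at hn
    by_cases h : n < v.length
    · have h0 := hfix 0 n h
      have hmp : morphPrefixLen φ (aSeq 2 [1,0]) 0 = 0 := by simp [morphPrefixLen]
      rw [hmp, Nat.zero_add] at h0
      rw [h0, List.getD_append _ _ _ _ h]
    · have hi : n - v.length < (φ (aSeq 2 [1,0] 1)).length := by rw [hφ1]; omega
      have h1 := hfix 1 (n - v.length) hi
      have hmp : morphPrefixLen φ (aSeq 2 [1,0]) 1 = v.length := by
        simp [morphPrefixLen]; rfl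
      rw [hmp, show v.length + (n - v.length) = n by omega, hφ1] at h1
      rw [h1, List.getD_append_right _ _ _ _ (by omega)]
  rcases part1 v (by intro h; rw [h] at hL; simp at hL) hpre with h | h
  · rw [h] at hL; simp at hL
  · have h2 := hpre 2 (by rw [h]; simp)
    rw [s2, h] at h2
    simp at h2


theorem stmt17 :
    (∀ v : List ℕ, v ≠ [] → IsPrefixSeq (v ++ v) (aSeq 2 [1, 0]) →
      v = [0] ∨ v = [0, 0]) ∧
    ¬ PurelyMorphic 2 (aSeq 2 [1, 0]) := ⟨part1, part2⟩
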